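/- Let T ∈ ℕ, and for each t = 1,…,T let X_t ∈ ℝ^{n_t×d} and y_t ∈ ℝ^{n_t}. Let λ > 0 and run MultiVAW with Λ_t = λ I_d for all t, i.e. θ_t = A_t^{-1} b_{t-1} with A_t = λ I_d + Σ_{s=1}^t X_sᵀX_s and b_t = Σ_{s=1}^t X_sᵀy_s. Set ȳ = max_{t∈[T]} ‖y_t‖₂ and X̄ = max_{t∈[T]} ‖X_t‖_F. Then for every θ ∈ ℝ^d, R_T(θ) ≤ λ‖θ‖₂² + d ȳ² log(1 + T X̄² / (d λ)). -/

import Mathlib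

open Matrix Finset

noncomputable section

section MultiVawAux

set_option linter.unusedSectionVars false

variable {k m : Type*} [Fintype k] [Fintype m]

lemma mvaw_dp_shift (u : m → ℝ) (N : Matrix m k ℝ) (w : k → ℝ) :
    u ⬝ᵥ (N *ᵥ w) = (Nᵀ *ᵥ u) ⬝ᵥ w := by
  rw [dotProduct_mulVec, mulVec_transpose]

lemma mvaw_symm_eq {Q : Matrix k k ℝ} (h : Q.IsHermitian) : Qᵀ = Q := by
  rw [← conjTranspose_eq_transpose_of_trivial]; exact h

lemma mvaw_psd_tXX (X : Matrix m k ℝ) : (Xᵀ * X).PosSemidef := by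
  simpa [conjTranspose_eq_transpose_of_trivial] using posSemidef_conjTranspose_mul_self X

lemma mvaw_psd_sum {ι : Type*} (s : Finset ι) (f : ι → Matrix k k ℝ)
    (h : ∀ i ∈ s, (f i).PosSemidef) : (∑ i ∈ s, f i).PosSemidef := by
  classical
  induction s using Finset.induction with
  | empty => simpa using Matrix.PosSemidef.zero
  | insert _ _ hx ih =>
    rename_i a s
    rw [Finset.sum_insert hx]
    exact (h a (mem_insert_self a s)).add (ih fun i hi => h i (mem_insert_of_mem hi))

lemma mvaw_posdef_smul_one [DecidableEq k] {lam : ℝ} (hlam : 0 < lam) : (lam • (1 : Matrix k k ℝ)).PosDef := by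
  rw [smul_one_eq_diagonal]
  exact Matrix.PosDef.diagonal fun i => hlam

lemma mvaw_sum_mulVec {ι : Type*} (s : Finset ι) (f : ι → Matrix k k ℝ) (v : k → ℝ) :
    (∑ i ∈ s, f i) *ᵥ v = ∑ i ∈ s, (f i *ᵥ v) := by
  classical
  induction s using Finset.induction with
  | empty => simp
  | insert _ _ hx ih =>
    rename_i a s
    rw [Finset.sum_insert hx, Finset.sum_insert hx, add_mulVec, ih]

lemma mvaw_dotProduct_sum {ι : Type*} (s : Finset ι) (u : k → ℝ) (f : ι → (k → ℝ)) :
    u ⬝ᵥ (∑ i ∈ s, f i) = ∑ i ∈ s, u ⬝ᵥ f i := by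
  classical
  induction s using Finset.induction with
  | empty => simp
  | insert _ _ hx ih =>
    rename_i a s
    rw [Finset.sum_insert hx, Finset.sum_insert hx, dotProduct_add, ih]

lemma mvaw_sum_dotProduct {ι : Type*} (s : Finset ι) (f : ι → (k → ℝ)) (u : k → ℝ) :
    (∑ i ∈ s, f i) ⬝ᵥ u = ∑ i ∈ s, f i ⬝ᵥ u := by
  rw [dotProduct_comm, mvaw_dotProduct_sum]
  exact Finset.sum_congr rfl fun i _ => dotProduct_comm _ _

lemma mvaw_quad_expand (M : Matrix m k ℝ) (v : k → ℝ) (yv : m → ℝ) :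
    (∑ i, ((M *ᵥ v - yv) i) ^ 2)
      = v ⬝ᵥ ((Mᵀ * M) *ᵥ v) - 2 * ((Mᵀ *ᵥ yv) ⬝ᵥ v) + yv ⬝ᵥ yv := by
  have h : (∑ i, ((M *ᵥ v - yv) i) ^ 2) = (M *ᵥ v - yv) ⬝ᵥ (M *ᵥ v - yv) := by
    simp [dotProduct, pow_two]
  have h1 : v ⬝ᵥ ((Mᵀ * M) *ᵥ v) = (M *ᵥ v) ⬝ᵥ (M *ᵥ v) := by
    rw [← mulVec_mulVec, mvaw_dp_shift, transpose_transpose]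
  have h2 : (M *ᵥ v) ⬝ᵥ yv = (Mᵀ *ᵥ yv) ⬝ᵥ v := by
    rw [dotProduct_comm, mvaw_dp_shift]
  have h3 : yv ⬝ᵥ (M *ᵥ v) = (Mᵀ *ᵥ yv) ⬝ᵥ v := by rw [mvaw_dp_shift]
  rw [h, sub_dotProduct, dotProduct_sub, dotProduct_sub, h1, h2, h3]
  ring

lemma mvaw_quad_min [DecidableEq k] {Q : Matrix k k ℝ} (hQ : Q.PosDef) (bv v : k → ℝ) :
    - (bv ⬝ᵥ (Q⁻¹ *ᵥ bv)) ≤ v ⬝ᵥ (Q *ᵥ v) - 2 * (bv ⬝ᵥ v) := by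
  set w := v - Q⁻¹ *ᵥ bv with hw
  have h0 : 0 ≤ w ⬝ᵥ (Q *ᵥ w) := by simpa using hQ.posSemidef.dotProduct_mulVec_nonneg w
  have hQm : Q *ᵥ (Q⁻¹ *ᵥ bv) = bv := by
    rw [mulVec_mulVec, mul_nonsing_inv _ (isUnit_iff_ne_zero.mpr hQ.det_pos.ne'), one_mulVec]
  have hexp : w ⬝ᵥ (Q *ᵥ w)
      = v ⬝ᵥ (Q *ᵥ v) - 2 * (bv ⬝ᵥ v) + bv ⬝ᵥ (Q⁻¹ *ᵥ bv) := by
    rw [hw, mulVec_sub, hQm, sub_dotProduct, dotProduct_sub, dotProduct_sub]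
    have h1 : (Q⁻¹ *ᵥ bv) ⬝ᵥ (Q *ᵥ v) = bv ⬝ᵥ v := by
      rw [mvaw_dp_shift, mvaw_symm_eq hQ.isHermitian, hQm]
    have h2 : v ⬝ᵥ bv = bv ⬝ᵥ v := dotProduct_comm _ _
    have h3 : (Q⁻¹ *ᵥ bv) ⬝ᵥ bv = bv ⬝ᵥ (Q⁻¹ *ᵥ bv) := dotProduct_comm _ _
    rw [h1, h2, h3]; ring
  linarith

lemma mvaw_trace_nonneg_of_psd [DecidableEq k] {N : Matrix k k ℝ} (hN : N.PosSemidef) : 0 ≤ N.trace := by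
  rw [Matrix.trace]
  apply Finset.sum_nonneg
  intro i _
  have := hN.dotProduct_mulVec_nonneg (Pi.single i 1)
  simpa [mulVec, dotProduct, Pi.single_apply] using this

open scoped MatrixOrder in
noncomputable def Matrix.PosSemidef.sqrt [DecidableEq k] {A : Matrix k k ℝ} (_ : A.PosSemidef) : Matrix k k ℝ :=
  CFC.sqrt A

open scoped MatrixOrder in
lemma Matrix.PosSemidef.sqrt_mul_self [DecidableEq k] {A : Matrix k k ℝ} (hA : A.PosSemidef) :
    hA.sqrt * hA.sqrt = A :=
  CFC.sqrt_mul_sqrt_self A (Matrix.nonneg_iff_posSemidef.mpr hA)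

open scoped MatrixOrder in
lemma Matrix.PosSemidef.posSemidef_sqrt [DecidableEq k] {A : Matrix k k ℝ} (hA : A.PosSemidef) :
    hA.sqrt.PosSemidef :=
  Matrix.nonneg_iff_posSemidef.mp (CFC.sqrt_nonneg A)

lemma mvaw_trace_inv_mul_nonneg [DecidableEq k] {A M : Matrix k k ℝ} (hA : A.PosDef) (hM : M.PosSemidef) :
    0 ≤ (A⁻¹ * M).trace := by
  have hI : (A⁻¹).PosSemidef := hA.posSemidef.inv
  set S := hI.sqrt with hS
  have hSS : S * S = A⁻¹ := hI.sqrt_mul_self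
  have hSh : Sᵀ = S := mvaw_symm_eq hI.posSemidef_sqrt.isHermitian
  have h1 : A⁻¹ * M = S * (S * M) := by rw [← Matrix.mul_assoc, hSS]
  have h2 : (S * (S * M)).trace = ((S * M) * S).trace := trace_mul_comm _ _
  have h3 : (S * M * S).PosSemidef := by
    have := hM.mul_mul_conjTranspose_same S
    rwa [conjTranspose_eq_transpose_of_trivial, hSh] at this
  rw [h1, h2]
  exact mvaw_trace_nonneg_of_psd h3

lemma mvaw_dp_le_trace [DecidableEq k] {A : Matrix k k ℝ} (hA : A.PosDef) (X : Matrix m k ℝ) (yv : m → ℝ) :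
    yv ⬝ᵥ ((X * A⁻¹ * Xᵀ) *ᵥ yv) ≤ (yv ⬝ᵥ yv) * (A⁻¹ * (Xᵀ * X)).trace := by
  have hI : (A⁻¹).PosSemidef := hA.posSemidef.inv
  set S := hI.sqrt with hS
  have hSS : S * S = A⁻¹ := hI.sqrt_mul_self
  have hSh : Sᵀ = S := mvaw_symm_eq hI.posSemidef_sqrt.isHermitian
  set M := X * S with hMdef
  have hfact : X * A⁻¹ * Xᵀ = M * Mᵀ := by
    rw [hMdef, transpose_mul, hSh, ← hSS]
    simp only [Matrix.mul_assoc]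
  have hdp : yv ⬝ᵥ ((M * Mᵀ) *ᵥ yv) = (Mᵀ *ᵥ yv) ⬝ᵥ (Mᵀ *ᵥ yv) := by
    rw [← mulVec_mulVec, mvaw_dp_shift]
  have hCS : (Mᵀ *ᵥ yv) ⬝ᵥ (Mᵀ *ᵥ yv) ≤ (yv ⬝ᵥ yv) * (∑ j, ∑ i, (M i j) ^ 2) := by
    have : ∀ j, ((Mᵀ *ᵥ yv) j) ^ 2 ≤ (∑ i, (M i j) ^ 2) * (∑ i, (yv i) ^ 2) := by
      intro j
      have := Finset.sum_mul_sq_le_sq_mul_sq Finset.univ (fun i => M i j) yv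
      simpa [transpose_apply, mulVec, dotProduct, mul_comm] using this
    calc (Mᵀ *ᵥ yv) ⬝ᵥ (Mᵀ *ᵥ yv) = ∑ j, ((Mᵀ *ᵥ yv) j) ^ 2 := by
          simp [dotProduct, pow_two]
      _ ≤ ∑ j, (∑ i, (M i j) ^ 2) * (∑ i, (yv i) ^ 2) :=
          Finset.sum_le_sum fun j _ => this j
      _ = (yv ⬝ᵥ yv) * (∑ j, ∑ i, (M i j) ^ 2) := by
          rw [← Finset.sum_mul]
          simp [dotProduct, pow_two, mul_comm]
  have htr : (∑ j, ∑ i, (M i j) ^ 2) = (A⁻¹ * (Xᵀ * X)).trace := by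
    have h1 : (∑ j, ∑ i, (M i j) ^ 2) = (Mᵀ * M).trace := by
      simp [Matrix.trace, Matrix.mul_apply, Matrix.diag, pow_two]
    rw [h1, hMdef, transpose_mul, hSh]
    calc (S * Xᵀ * (X * S)).trace = (S * Xᵀ * X * S).trace := by rw [Matrix.mul_assoc (S * Xᵀ)]
      _ = (S * (S * Xᵀ * X)).trace := (trace_mul_comm _ _).symm
      _ = (A⁻¹ * (Xᵀ * X)).trace := by
          rw [← Matrix.mul_assoc, ← Matrix.mul_assoc, hSS, Matrix.mul_assoc]
  rw [hfact, hdp, ← htr]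
  exact hCS

lemma mvaw_trace_eq_sum_eigs [DecidableEq k] {A : Matrix k k ℝ} (hA : A.IsHermitian) :
    A.trace = ∑ i, hA.eigenvalues i := by
  conv_lhs => rw [hA.spectral_theorem, Unitary.conjStarAlgAut_apply]
  rw [trace_mul_cycle, (Matrix.mem_unitaryGroup_iff').mp (hA.eigenvectorUnitary).2, one_mul,
    trace_diagonal]
  simp

lemma mvaw_det_le_pow_trace [DecidableEq k] {A : Matrix k k ℝ} (hA : A.PosDef) (hk : 0 < Fintype.card k) :
    A.det ≤ (A.trace / Fintype.card k) ^ (Fintype.card k) := by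
  set nn := Fintype.card k with hnn
  have hμpos : ∀ i, 0 < hA.1.eigenvalues i := hA.eigenvalues_pos
  have hgm := Real.geom_mean_le_arith_mean_weighted Finset.univ
    (fun _ => (nn : ℝ)⁻¹) hA.1.eigenvalues
    (fun i _ => by positivity)
    (by simp [Finset.card_univ, ← hnn, mul_inv_cancel₀ (Nat.cast_ne_zero.mpr hk.ne' : (nn:ℝ) ≠ 0)])
    (fun i _ => (hμpos i).le)
  have hsum : ∑ i, (nn : ℝ)⁻¹ * hA.1.eigenvalues i = A.trace / nn := by
    rw [← Finset.mul_sum, ← mvaw_trace_eq_sum_eigs hA.1, div_eq_inv_mul]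
  have hprod : (∏ i, hA.1.eigenvalues i ^ ((nn : ℝ)⁻¹)) ^ nn = A.det := by
    rw [← Finset.prod_pow]
    have hdet : A.det = ∏ i, hA.1.eigenvalues i := by
      rw [hA.1.det_eq_prod_eigenvalues]; norm_num
    rw [hdet]
    apply Finset.prod_congr rfl
    intro i _
    rw [← Real.rpow_natCast (hA.1.eigenvalues i ^ ((nn : ℝ)⁻¹)), ← Real.rpow_mul (hμpos i).le,
      inv_mul_cancel₀ (Nat.cast_ne_zero.mpr hk.ne' : (nn:ℝ) ≠ 0), Real.rpow_one]
  calc A.det = (∏ i, hA.1.eigenvalues i ^ ((nn : ℝ)⁻¹)) ^ nn := hprod.symm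
    _ ≤ (A.trace / nn) ^ nn := by
        apply pow_le_pow_left₀ (Finset.prod_nonneg fun i _ => Real.rpow_nonneg (hμpos i).le _)
        rw [← hsum]; exact hgm

lemma mvaw_trace_le_log_det_step [DecidableEq k] {B M : Matrix k k ℝ} (hB : B.PosDef) (hM : M.PosSemidef) :
    ((B + M)⁻¹ * M).trace ≤ Real.log (B + M).det - Real.log B.det := by
  have hA : (B + M).PosDef := hB.add_posSemidef hM
  set R := hA.posSemidef.sqrt with hRdef
  have hRR : R * R = B + M := hA.posSemidef.sqrt_mul_self
  have hRh : Rᵀ = R := mvaw_symm_eq hA.posSemidef.posSemidef_sqrt.isHermitian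
  have hdetRR : R.det * R.det = (B + M).det := by rw [← det_mul, hRR]
  have hdetR : R.det ≠ 0 := by
    intro h; rw [h, zero_mul] at hdetRR; exact hA.det_pos.ne hdetRR
  have hRunit : IsUnit R.det := isUnit_iff_ne_zero.mpr hdetR
  have hRiT : R⁻¹ᵀ = R⁻¹ := by rw [transpose_nonsing_inv, hRh]
  set C := R⁻¹ * B * R⁻¹ with hCdef
  have hCherm : C.IsHermitian := by
    rw [Matrix.IsHermitian, conjTranspose_eq_transpose_of_trivial, hCdef,
      transpose_mul, transpose_mul, hRiT, mvaw_symm_eq hB.isHermitian, Matrix.mul_assoc]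
  have hCpd : C.PosDef := by
    refine Matrix.PosDef.of_dotProduct_mulVec_pos hCherm fun x hx => ?_
    have hu : R⁻¹ *ᵥ x ≠ 0 := by
      intro h
      apply hx
      have : R *ᵥ (R⁻¹ *ᵥ x) = x := by
        rw [mulVec_mulVec, mul_nonsing_inv _ hRunit, one_mulVec]
      rw [h, mulVec_zero] at this; exact this.symm
    have hcalc : x ⬝ᵥ (C *ᵥ x) = (R⁻¹ *ᵥ x) ⬝ᵥ (B *ᵥ (R⁻¹ *ᵥ x)) := by
      rw [hCdef, ← mulVec_mulVec, ← mulVec_mulVec, mvaw_dp_shift, hRiT]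
    simpa [hcalc] using hB.dotProduct_mulVec_pos hu
  have hμpos : ∀ i, 0 < hCherm.eigenvalues i := fun i => by
    simpa using hCpd.eigenvalues_pos i
  have hAdetunit : IsUnit (B + M).det := isUnit_iff_ne_zero.mpr hA.det_pos.ne'
  have htr1 : ((B + M)⁻¹ * M).trace = (Fintype.card k : ℝ) - ((B + M)⁻¹ * B).trace := by
    have hMsub : (B + M)⁻¹ * M = 1 - (B + M)⁻¹ * B := by
      rw [← nonsing_inv_mul _ hAdetunit, ← Matrix.mul_sub]
      congr 1
      abel
    rw [hMsub, trace_sub, trace_one]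
  have htr2 : ((B + M)⁻¹ * B).trace = C.trace := by
    rw [← hRR, Matrix.mul_inv_rev, hCdef]
    rw [Matrix.trace_mul_cycle R⁻¹ B R⁻¹]
  have hdetC : C.det = B.det / (B + M).det := by
    rw [hCdef, det_mul, det_mul, det_nonsing_inv, Ring.inverse_eq_inv']
    rw [← hdetRR]
    field_simp
  have hdetCprod : C.det = ∏ i, hCherm.eigenvalues i := by
    rw [hCherm.det_eq_prod_eigenvalues]; norm_num
  have hlogC : Real.log C.det = ∑ i, Real.log (hCherm.eigenvalues i) := by
    rw [hdetCprod, Real.log_prod]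
    exact fun i _ => (hμpos i).ne'
  have hlogdiv : Real.log C.det = Real.log B.det - Real.log (B + M).det := by
    rw [hdetC, Real.log_div hB.det_pos.ne' hA.det_pos.ne']
  have htrC : C.trace = ∑ i, hCherm.eigenvalues i := mvaw_trace_eq_sum_eigs hCherm
  have key : (Fintype.card k : ℝ) - ∑ i, hCherm.eigenvalues i
      ≤ - ∑ i, Real.log (hCherm.eigenvalues i) := by
    have hpt : ∀ i ∈ Finset.univ,
        (1 : ℝ) - hCherm.eigenvalues i ≤ - Real.log (hCherm.eigenvalues i) := by
      intro i _
      have := Real.log_le_sub_one_of_pos (hμpos i)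
      linarith
    have hsum := Finset.sum_le_sum hpt
    simpa [Finset.sum_sub_distrib, Finset.card_univ] using hsum
  rw [htr1, htr2, htrC]
  have heq := hlogC ▸ hlogdiv
  linarith [key, heq.symm]

lemma mvaw_per_step [DecidableEq k] {V A : Matrix k k ℝ} (hV : V.PosDef) (X : Matrix m k ℝ)
    (hAeq : A = V + Xᵀ * X) {β : k → ℝ} {Y : m → ℝ} {θ : k → ℝ} (hθ : θ = A⁻¹ *ᵥ β) :
    (∑ i, ((X *ᵥ θ - Y) i) ^ 2)
      ≤ (Y ⬝ᵥ Y - (β + Xᵀ *ᵥ Y) ⬝ᵥ (A⁻¹ *ᵥ (β + Xᵀ *ᵥ Y)) + β ⬝ᵥ (V⁻¹ *ᵥ β))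
        + Y ⬝ᵥ ((X * A⁻¹ * Xᵀ) *ᵥ Y) := by
  set M := Xᵀ * X with hMdef
  have hMpsd : M.PosSemidef := mvaw_psd_tXX X
  have hApd : A.PosDef := hAeq ▸ hV.add_posSemidef hMpsd
  have hVunit : IsUnit V.det := isUnit_iff_ne_zero.mpr hV.det_pos.ne'
  have hAunit : IsUnit A.det := isUnit_iff_ne_zero.mpr hApd.det_pos.ne'
  have hAiT : A⁻¹ᵀ = A⁻¹ := by rw [transpose_nonsing_inv, mvaw_symm_eq hApd.isHermitian]
  have hMT : Mᵀ = M := mvaw_symm_eq hMpsd.isHermitian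
  set w := Xᵀ *ᵥ Y with hwdef
  have key0 : (∑ i, ((X *ᵥ θ - Y) i) ^ 2)
      = θ ⬝ᵥ (M *ᵥ θ) - 2 * (w ⬝ᵥ θ) + Y ⬝ᵥ Y := by
    rw [mvaw_quad_expand X θ Y, hwdef, hMdef, mvaw_dp_shift]
  have hshiftA : ∀ u v : k → ℝ, u ⬝ᵥ (A⁻¹ *ᵥ v) = (A⁻¹ *ᵥ u) ⬝ᵥ v := by
    intro u v; rw [mvaw_dp_shift, hAiT]
  have key1 : (β + w) ⬝ᵥ (A⁻¹ *ᵥ (β + w))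
      = β ⬝ᵥ (A⁻¹ *ᵥ β) + 2 * (w ⬝ᵥ θ) + w ⬝ᵥ (A⁻¹ *ᵥ w) := by
    rw [mulVec_add, add_dotProduct, dotProduct_add, dotProduct_add]
    have e1 : β ⬝ᵥ (A⁻¹ *ᵥ w) = w ⬝ᵥ θ := by
      rw [hshiftA, ← hθ, dotProduct_comm]
    have e2 : w ⬝ᵥ (A⁻¹ *ᵥ β) = w ⬝ᵥ θ := by rw [← hθ]
    rw [e1, e2]; ring
  have key2 : Y ⬝ᵥ ((X * A⁻¹ * Xᵀ) *ᵥ Y) = w ⬝ᵥ (A⁻¹ *ᵥ w) := by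
    rw [← mulVec_mulVec, ← mulVec_mulVec, mvaw_dp_shift, ← hwdef]
  have hmat : V⁻¹ - A⁻¹ = A⁻¹ * M * V⁻¹ := by
    have hrw : A⁻¹ * M * V⁻¹ = A⁻¹ * (A - V) * V⁻¹ := by rw [hAeq]; congr 2; abel
    rw [hrw, Matrix.mul_sub, Matrix.sub_mul, nonsing_inv_mul _ hAunit, Matrix.one_mul,
      Matrix.mul_assoc, mul_nonsing_inv _ hVunit, Matrix.mul_one]
  have hβA : A *ᵥ θ = β := by
    rw [hθ, mulVec_mulVec, mul_nonsing_inv _ hAunit, one_mulVec]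
  have hVβ : V⁻¹ *ᵥ β = θ + V⁻¹ *ᵥ (M *ᵥ θ) := by
    rw [← hβA, hAeq, add_mulVec, mulVec_add, mulVec_mulVec, nonsing_inv_mul _ hVunit,
      one_mulVec, mulVec_mulVec, ← mulVec_mulVec]
  have key3 : β ⬝ᵥ (V⁻¹ *ᵥ β) - β ⬝ᵥ (A⁻¹ *ᵥ β)
      = θ ⬝ᵥ (M *ᵥ θ) + (M *ᵥ θ) ⬝ᵥ (V⁻¹ *ᵥ (M *ᵥ θ)) := by
    have e0 : β ⬝ᵥ (V⁻¹ *ᵥ β) - β ⬝ᵥ (A⁻¹ *ᵥ β) = β ⬝ᵥ ((V⁻¹ - A⁻¹) *ᵥ β) := by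
      rw [sub_mulVec, dotProduct_sub]
    rw [e0, hmat]
    have e1 : (A⁻¹ * M * V⁻¹) *ᵥ β = A⁻¹ *ᵥ (M *ᵥ (V⁻¹ *ᵥ β)) := by
      rw [← mulVec_mulVec, ← mulVec_mulVec]
    rw [e1, hshiftA, ← hθ, hVβ, mulVec_add, dotProduct_add]
    have e2 : θ ⬝ᵥ (M *ᵥ (V⁻¹ *ᵥ (M *ᵥ θ))) = (M *ᵥ θ) ⬝ᵥ (V⁻¹ *ᵥ (M *ᵥ θ)) := by
      rw [mvaw_dp_shift, hMT]
    rw [e2]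
  have key4 : 0 ≤ (M *ᵥ θ) ⬝ᵥ (V⁻¹ *ᵥ (M *ᵥ θ)) := by
    simpa using hV.inv.posSemidef.dotProduct_mulVec_nonneg (M *ᵥ θ)
  rw [key0, key1, key2]
  linarith [key3, key4]

end MultiVawAux

/-- **Regret bound for MultiVAW with standard regularization `Λ_t = λ I_d`**
(Corollary 2).  With `A t = λ I_d + ∑_{s≤t} Xₛᵀ Xₛ`, `b t = ∑_{s≤t} Xₛᵀ yₛ`,
iterates `θ t = (A t)⁻¹ (b (t-1))`, `ȳ = max_{t∈[T]} ‖y t‖₂` and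
`X̄ = max_{t∈[T]} ‖X t‖_F`, the regret against any `θc ∈ ℝ^d` is at most
`λ ‖θc‖₂² + d ȳ² log (1 + T X̄² / (d λ))`. -/
theorem multivaw_standard_reg_regret_bound
    (T d : ℕ) (hT : 1 ≤ T)
    (n : ℕ → ℕ)
    (X : (t : ℕ) → Matrix (Fin (n t)) (Fin d) ℝ)
    (y : (t : ℕ) → Fin (n t) → ℝ)
    (lam : ℝ) (hlam : 0 < lam)
    (A : ℕ → Matrix (Fin d) (Fin d) ℝ)
    (hA : ∀ t ∈ Icc 1 T,
      A t = lam • (1 : Matrix (Fin d) (Fin d) ℝ) + ∑ s ∈ Icc 1 t, (X s)ᵀ * X s)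
    (b : ℕ → (Fin d → ℝ))
    (hb : ∀ t ≤ T, b t = ∑ s ∈ Icc 1 t, (X s)ᵀ.mulVec (y s))
    (θ : ℕ → (Fin d → ℝ))
    (hθ : ∀ t ∈ Icc 1 T, θ t = (A t)⁻¹.mulVec (b (t - 1)))
    (ybar Xbar : ℝ)
    (hybar : ybar = (Icc 1 T).sup' (Finset.nonempty_Icc.mpr hT)
      (fun t => Real.sqrt (∑ i, (y t i) ^ 2)))
    (hXbar : Xbar = (Icc 1 T).sup' (Finset.nonempty_Icc.mpr hT)
      (fun t => Real.sqrt (∑ i, ∑ j, (X t i j) ^ 2)))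
    (θc : Fin d → ℝ) :
    (∑ t ∈ Icc 1 T, ∑ i, ((X t).mulVec (θ t) - y t) i ^ 2)
      - ∑ t ∈ Icc 1 T, ∑ i, ((X t).mulVec θc - y t) i ^ 2
    ≤ lam * ∑ i, (θc i) ^ 2
        + (d : ℝ) * ybar ^ 2 * Real.log (1 + (T : ℝ) * Xbar ^ 2 / ((d : ℝ) * lam)) := by
  classical
  rcases Nat.eq_zero_or_pos d with hd0 | hdpos
  · subst hd0
    have hz : ∀ (t : ℕ) (v : Fin 0 → ℝ), (X t).mulVec v = 0 := by
      intro t v; funext i; simp [Matrix.mulVec, dotProduct]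
    simp [hz]
  have hd0' : (0:ℝ) < d := Nat.cast_pos.mpr hdpos
  set B : ℕ → Matrix (Fin d) (Fin d) ℝ :=
    fun t => lam • (1 : Matrix (Fin d) (Fin d) ℝ) + ∑ s ∈ Icc 1 t, (X s)ᵀ * X s with hBdef
  set β : ℕ → (Fin d → ℝ) := fun t => ∑ s ∈ Icc 1 t, (X s)ᵀ *ᵥ (y s) with hβdef
  set c : ℕ → ℝ := fun t => ∑ s ∈ Icc 1 t, (y s) ⬝ᵥ (y s) with hcdef
  set Φ : ℕ → ℝ := fun t => c t - β t ⬝ᵥ ((B t)⁻¹ *ᵥ β t) with hΦdef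
  set L : ℕ → ℝ := fun t => Real.log (B t).det with hLdef
  have hBpd : ∀ t, (B t).PosDef := fun t =>
    (mvaw_posdef_smul_one hlam).add_posSemidef
      (mvaw_psd_sum _ _ fun s _ => mvaw_psd_tXX (X s))
  have hBstep : ∀ i : ℕ, B (i+1) = B i + (X (i+1))ᵀ * X (i+1) := by
    intro i
    simp only [hBdef]
    rw [Finset.sum_Icc_succ_top (Nat.succ_le_succ (Nat.zero_le i)), add_assoc]
  have hβstep : ∀ i : ℕ, β (i+1) = β i + (X (i+1))ᵀ *ᵥ y (i+1) := by
    intro i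
    simp only [hβdef]
    rw [Finset.sum_Icc_succ_top (Nat.succ_le_succ (Nat.zero_le i))]
  have hcstep : ∀ i : ℕ, c (i+1) = c i + y (i+1) ⬝ᵥ y (i+1) := by
    intro i
    simp only [hcdef]
    rw [Finset.sum_Icc_succ_top (Nat.succ_le_succ (Nat.zero_le i))]
  have hyle : ∀ t ∈ Icc 1 T, (y t) ⬝ᵥ (y t) ≤ ybar ^ 2 := by
    intro t ht
    have h1 : Real.sqrt (∑ i, (y t i)^2) ≤ ybar := by
      rw [hybar]
      exact Finset.le_sup' (fun t => Real.sqrt (∑ i, (y t i)^2)) ht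
    have h2 : (0:ℝ) ≤ ∑ i, (y t i)^2 := Finset.sum_nonneg fun i _ => sq_nonneg _
    have h3 : (y t) ⬝ᵥ (y t) = ∑ i, (y t i)^2 := by simp [dotProduct, pow_two]
    rw [h3, ← Real.sq_sqrt h2]
    exact pow_le_pow_left₀ (Real.sqrt_nonneg _) h1 2
  -- per-round bound
  have step : ∀ i, i < T →
      (∑ j, ((X (i+1)).mulVec (θ (i+1)) - y (i+1)) j ^ 2)
        ≤ (Φ (i+1) - Φ i) + ybar^2 * (L (i+1) - L i) := by
    intro i hi
    have hmem : i + 1 ∈ Icc 1 T := Finset.mem_Icc.mpr ⟨Nat.succ_le_succ (Nat.zero_le i), hi⟩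
    have hθi : θ (i+1) = (B (i+1))⁻¹ *ᵥ β i := by
      rw [hθ _ hmem, hA _ hmem]
      simp only [Nat.add_sub_cancel]
      rw [hb _ (le_of_lt hi)]
    have hps := mvaw_per_step (hBpd i) (X (i+1)) (hBstep i) (Y := y (i+1)) hθi
    have hΦd : Φ (i+1) - Φ i
        = y (i+1) ⬝ᵥ y (i+1)
          - (β i + (X (i+1))ᵀ *ᵥ y (i+1)) ⬝ᵥ ((B (i+1))⁻¹ *ᵥ (β i + (X (i+1))ᵀ *ᵥ y (i+1)))
          + β i ⬝ᵥ ((B i)⁻¹ *ᵥ β i) := by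
      simp only [hΦdef]
      rw [hcstep i, ← hβstep i]
      ring
    have hsl : y (i+1) ⬝ᵥ ((X (i+1) * (B (i+1))⁻¹ * (X (i+1))ᵀ) *ᵥ y (i+1))
        ≤ ybar^2 * (L (i+1) - L i) := by
      have h1 := mvaw_dp_le_trace (hBpd (i+1)) (X (i+1)) (y (i+1))
      have hτ0 : 0 ≤ ((B (i+1))⁻¹ * ((X (i+1))ᵀ * X (i+1))).trace :=
        mvaw_trace_inv_mul_nonneg (hBpd (i+1)) (mvaw_psd_tXX _)
      have hτle : ((B (i+1))⁻¹ * ((X (i+1))ᵀ * X (i+1))).trace ≤ L (i+1) - L i := by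
        have h2 := mvaw_trace_le_log_det_step (hBpd i) (mvaw_psd_tXX (X (i+1)))
        rw [← hBstep i] at h2
        exact h2
      calc y (i+1) ⬝ᵥ ((X (i+1) * (B (i+1))⁻¹ * (X (i+1))ᵀ) *ᵥ y (i+1))
          ≤ (y (i+1) ⬝ᵥ y (i+1)) * ((B (i+1))⁻¹ * ((X (i+1))ᵀ * X (i+1))).trace := h1
        _ ≤ ybar^2 * ((B (i+1))⁻¹ * ((X (i+1))ᵀ * X (i+1))).trace :=
            mul_le_mul_of_nonneg_right (hyle _ hmem) hτ0
        _ ≤ ybar^2 * (L (i+1) - L i) :=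
            mul_le_mul_of_nonneg_left hτle (sq_nonneg _)
    rw [hΦd]
    calc (∑ j, ((X (i+1)).mulVec (θ (i+1)) - y (i+1)) j ^ 2)
        ≤ (y (i+1) ⬝ᵥ y (i+1)
          - (β i + (X (i+1))ᵀ *ᵥ y (i+1)) ⬝ᵥ ((B (i+1))⁻¹ *ᵥ (β i + (X (i+1))ᵀ *ᵥ y (i+1)))
          + β i ⬝ᵥ ((B i)⁻¹ *ᵥ β i))
          + y (i+1) ⬝ᵥ ((X (i+1) * (B (i+1))⁻¹ * (X (i+1))ᵀ) *ᵥ y (i+1)) := hps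
      _ ≤ _ := by linarith [hsl]
  -- convert Icc to range
  have hconv : ∀ (TT : ℕ) (f : ℕ → ℝ), ∑ t ∈ Icc 1 TT, f t = ∑ i ∈ range TT, f (i+1) := by
    intro TT f
    induction TT with
    | zero => simp
    | succ nn ih =>
      rw [Finset.sum_Icc_succ_top (Nat.succ_le_succ (Nat.zero_le nn)), Finset.sum_range_succ, ih]
  have hΦ0 : Φ 0 = 0 := by
    have hIcc : Icc 1 0 = (∅ : Finset ℕ) := rfl
    simp [hΦdef, hcdef, hβdef, hIcc]
  have main1 : (∑ t ∈ Icc 1 T, ∑ i, ((X t).mulVec (θ t) - y t) i ^ 2)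
      ≤ Φ T + ybar^2 * (L T - L 0) := by
    rw [hconv T]
    calc ∑ i ∈ range T, (∑ j, ((X (i+1)).mulVec (θ (i+1)) - y (i+1)) j ^ 2)
        ≤ ∑ i ∈ range T, ((Φ (i+1) - Φ i) + ybar^2 * (L (i+1) - L i)) :=
          Finset.sum_le_sum fun i hi => step i (Finset.mem_range.mp hi)
      _ = (Φ T - Φ 0) + ybar^2 * (L T - L 0) := by
          rw [Finset.sum_add_distrib, Finset.sum_range_sub, ← Finset.mul_sum,
            Finset.sum_range_sub]
      _ = Φ T + ybar^2 * (L T - L 0) := by rw [hΦ0]; ring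
  -- comparator bound
  have main2 : Φ T ≤ lam * (∑ i, θc i ^ 2)
      + ∑ t ∈ Icc 1 T, ∑ i, ((X t).mulVec θc - y t) i ^ 2 := by
    have hq := mvaw_quad_min (hBpd T) (β T) θc
    have hloss : ∑ t ∈ Icc 1 T, ∑ i, ((X t).mulVec θc - y t) i ^ 2
        = θc ⬝ᵥ ((∑ s ∈ Icc 1 T, (X s)ᵀ * X s) *ᵥ θc) - 2 * (β T ⬝ᵥ θc) + c T := by
      rw [Finset.sum_congr rfl fun t _ => mvaw_quad_expand (X t) θc (y t)]
      rw [Finset.sum_add_distrib, Finset.sum_sub_distrib, mvaw_sum_mulVec, mvaw_dotProduct_sum,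
        ← Finset.mul_sum, ← mvaw_sum_dotProduct]
    have hBT : θc ⬝ᵥ (B T *ᵥ θc)
        = lam * (θc ⬝ᵥ θc) + θc ⬝ᵥ ((∑ s ∈ Icc 1 T, (X s)ᵀ * X s) *ᵥ θc) := by
      simp only [hBdef]
      rw [add_mulVec, dotProduct_add, smul_mulVec, one_mulVec, dotProduct_smul]
      simp [smul_eq_mul]
    have hθc2 : (∑ i, θc i ^ 2) = θc ⬝ᵥ θc := by simp [dotProduct, pow_two]
    have hΦT : Φ T = c T - β T ⬝ᵥ ((B T)⁻¹ *ᵥ β T) := rfl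
    rw [hΦT, hloss, hθc2]
    linarith [hq, hBT]
  -- log-det bound
  have hS0 : ∀ s ∈ Icc 1 T, (0:ℝ) ≤ ∑ i, ∑ j, (X s i j)^2 := fun s _ => by positivity
  have hXle : ∀ s ∈ Icc 1 T, (∑ i, ∑ j, (X s i j)^2) ≤ Xbar^2 := by
    intro s hs
    have h1 : Real.sqrt (∑ i, ∑ j, (X s i j)^2) ≤ Xbar := by
      rw [hXbar]
      exact Finset.le_sup' (fun t => Real.sqrt (∑ i, ∑ j, (X t i j)^2)) hs
    rw [← Real.sq_sqrt (hS0 s hs)]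
    exact pow_le_pow_left₀ (Real.sqrt_nonneg _) h1 2
  have htrBT : (B T).trace = d * lam + ∑ s ∈ Icc 1 T, ∑ i, ∑ j, (X s i j)^2 := by
    simp only [hBdef]
    rw [trace_add, trace_smul, trace_one, trace_sum]
    congr 1
    · simp [Fintype.card_fin, mul_comm, smul_eq_mul]
    · refine Finset.sum_congr rfl fun s _ => ?_
      rw [Matrix.trace]
      simp only [Matrix.diag, Matrix.mul_apply, transpose_apply, pow_two]
      exact Finset.sum_comm
  have htrle : (B T).trace ≤ d * lam + T * Xbar^2 := by
    rw [htrBT]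
    have h1 : ∑ s ∈ Icc 1 T, (∑ i, ∑ j, (X s i j)^2) ≤ ∑ s ∈ Icc 1 T, Xbar^2 :=
      Finset.sum_le_sum hXle
    have h2 : ∑ s ∈ Icc 1 T, (Xbar^2 : ℝ) = T * Xbar^2 := by
      rw [Finset.sum_const, Nat.card_Icc]
      simp [nsmul_eq_mul]
    linarith [h1, h2.le, h2.ge]
  have htrpos : 0 < (B T).trace := by
    rw [htrBT]
    have := Finset.sum_nonneg hS0
    nlinarith [hd0', hlam]
  have hLT : L T ≤ d * Real.log ((B T).trace / d) := by
    have hdet := mvaw_det_le_pow_trace (hBpd T) (by simp [Fintype.card_fin]; exact hdpos)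
    have hdet' : (B T).det ≤ ((B T).trace / d) ^ d := by
      simpa [Fintype.card_fin] using hdet
    calc L T = Real.log (B T).det := rfl
      _ ≤ Real.log (((B T).trace / d) ^ d) := Real.log_le_log (hBpd T).det_pos hdet'
      _ = d * Real.log ((B T).trace / d) := by rw [Real.log_pow]
  have hL0 : L 0 = d * Real.log lam := by
    have hB0 : B 0 = lam • (1 : Matrix (Fin d) (Fin d) ℝ) := by
      have hIcc : Icc 1 0 = (∅ : Finset ℕ) := rfl
      simp [hBdef, hIcc]
    have : L 0 = Real.log ((lam • (1 : Matrix (Fin d) (Fin d) ℝ)).det) := by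
      simp only [hLdef]
      rw [hB0]
    rw [this, det_smul, det_one, mul_one, Fintype.card_fin, Real.log_pow]
  have main3 : ybar^2 * (L T - L 0) ≤ d * ybar^2 * Real.log (1 + T * Xbar^2 / (d*lam)) := by
    have hdl : (0:ℝ) < d * lam := by positivity
    have h2 : Real.log ((B T).trace / d) - Real.log lam = Real.log ((B T).trace/(d*lam)) := by
      rw [← Real.log_div (ne_of_gt (div_pos htrpos hd0')) hlam.ne', div_div]
    have h3 : (B T).trace/(d*lam) ≤ 1 + T * Xbar^2/(d*lam) := by
      have he : 1 + T * Xbar^2/(d*lam) = (d*lam + T * Xbar^2)/(d*lam) := by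
        field_simp
      rw [he]
      gcongr
    have h4 : Real.log ((B T).trace/(d*lam)) ≤ Real.log (1 + T * Xbar^2/(d*lam)) :=
      Real.log_le_log (div_pos htrpos hdl) h3
    have h5 : L T - L 0 ≤ d * Real.log (1 + T * Xbar^2/(d*lam)) := by
      have := hLT
      rw [hL0] at *
      nlinarith [h2, h4, hd0']
    calc ybar^2 * (L T - L 0) ≤ ybar^2 * (d * Real.log (1 + T * Xbar^2/(d*lam))) :=
        mul_le_mul_of_nonneg_left h5 (sq_nonneg _)
      _ = d * ybar^2 * Real.log (1 + T * Xbar^2/(d*lam)) := by ring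
  linarith [main1, main2, main3]
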